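/- A bicomplex matrix A ∈ 𝔹ℂ^{n×n} is hyperbolic positive if and only if there exist m ∈ ℕ and a bicomplex matrix B ∈ 𝔹ℂ^{m×n} such that A = (B*)ᵗ·B. -/

import Mathlib

open Complex Matrix Kronecker BigOperators

open scoped ComplexOrder

/-- Bicomplex numbers, modeled as pairs `(z₁, z₂) ∈ ℂ × ℂ` representing `z₁ + j z₂`.
Addition is the componentwise (Prod) addition. -/
abbrev BC : Type := ℂ × ℂ

noncomputable section

/-- Bicomplex multiplication: `(z₁,z₂)·(w₁,w₂) = (z₁w₁ − z₂w₂, z₁w₂ + z₂w₁)`. -/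
def bcMul (z w : BC) : BC := (z.1 * w.1 - z.2 * w.2, z.1 * w.2 + z.2 * w.1)

/-- The `*`-conjugate `Z* = conj z₁ − j conj z₂`. -/
def bcStar (z : BC) : BC := ((starRingEnd ℂ) z.1, -((starRingEnd ℂ) z.2))

/-- First idempotent component `λ₁ = z₁ − i z₂`. -/
def idem1 (z : BC) : ℂ := z.1 - Complex.I * z.2

/-- Second idempotent component `λ₂ = z₁ + i z₂`. -/
def idem2 (z : BC) : ℂ := z.1 + Complex.I * z.2

/-- Membership in `𝔻⁺`: both idempotent components are nonnegative real numbers. -/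
def inDplus (z : BC) : Prop :=
  (idem1 z).im = 0 ∧ 0 ≤ (idem1 z).re ∧ (idem2 z).im = 0 ∧ 0 ≤ (idem2 z).re

/-- A bicomplex matrix `A = A₁ + j A₂` is a pair of complex matrices. -/
abbrev BCMat (I J : Type) : Type := Matrix I J ℂ × Matrix I J ℂ

/-- Bicomplex matrix multiplication, induced by bicomplex multiplication. -/
def bmul {I J K : Type} [Fintype J] (A : BCMat I J) (B : BCMat J K) : BCMat I K :=
  (A.1 * B.1 - A.2 * B.2, A.1 * B.2 + A.2 * B.1)

/-- `(A*)ᵗ`: the entrywise `*`-conjugate followed by transpose. -/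
def bcStarT {I J : Type} (A : BCMat I J) : BCMat J I := (A.1ᴴ, -(A.2ᴴ))

/-- The `(j,k)` entry of a bicomplex matrix, as a bicomplex number. -/
def bcEntry {I J : Type} (A : BCMat I J) (j : I) (k : J) : BC := (A.1 j k, A.2 j k)

/-- First idempotent component `𝒜₁ = A₁ − i A₂` of a bicomplex matrix. -/
def midem1 {I J : Type} (A : BCMat I J) : Matrix I J ℂ := A.1 - Complex.I • A.2

/-- Second idempotent component `𝒜₂ = A₁ + i A₂` of a bicomplex matrix. -/
def midem2 {I J : Type} (A : BCMat I J) : Matrix I J ℂ := A.1 + Complex.I • A.2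

/-- The bicomplex number `(c*)ᵗ · A · c`. -/
def quadForm {I : Type} [Fintype I] (A : BCMat I I) (c : I → BC) : BC :=
  ∑ j, ∑ k, bcMul (bcStar (c j)) (bcMul (bcEntry A j k) (c k))

/-- `A` is hyperbolic positive if `(c*)ᵗ · A · c ∈ 𝔻⁺` for every bicomplex vector `c`. -/
def HypPos {I : Type} [Fintype I] (A : BCMat I I) : Prop :=
  ∀ c : I → BC, inDplus (quadForm A c)

/-- Bicomplex trace `Tr(A) = Tr(A₁) + j Tr(A₂)`. -/
def bcTrace {I : Type} [Fintype I] (A : BCMat I I) : BC := (A.1.trace, A.2.trace)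

/-- The bicomplex tensor product
`A ⊗ⱼ B = (A₁⊗B₁ − A₂⊗B₂) + j (A₁⊗B₂ + A₂⊗B₁)`. -/
def bkron {I J K L : Type} (A : BCMat I J) (B : BCMat K L) : BCMat (I × K) (J × L) :=
  (A.1 ⊗ₖ B.1 - A.2 ⊗ₖ B.2, A.1 ⊗ₖ B.2 + A.2 ⊗ₖ B.1)

end


noncomputable section AuxLemmas

open scoped ComplexConjugate

lemma idem1_bcMul (z w : BC) : idem1 (bcMul z w) = idem1 z * idem1 w := by
  simp only [idem1, bcMul]
  linear_combination (-(z.2 * w.2)) * Complex.I_sq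

lemma idem2_bcMul (z w : BC) : idem2 (bcMul z w) = idem2 z * idem2 w := by
  simp only [idem2, bcMul]
  linear_combination (-(z.2 * w.2)) * Complex.I_sq

lemma idem1_bcStar (z : BC) : idem1 (bcStar z) = (starRingEnd ℂ) (idem1 z) := by
  simp only [idem1, bcStar, map_sub, _root_.map_mul, Complex.conj_I]
  ring

lemma idem2_bcStar (z : BC) : idem2 (bcStar z) = (starRingEnd ℂ) (idem2 z) := by
  simp only [idem2, bcStar, map_add, _root_.map_mul, Complex.conj_I]
  ring

lemma idem1_sum {α : Type} (s : Finset α) (f : α → BC) :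
    idem1 (∑ a ∈ s, f a) = ∑ a ∈ s, idem1 (f a) := by
  simp [idem1, Prod.fst_sum, Prod.snd_sum, Finset.mul_sum, ← Finset.sum_sub_distrib]

lemma idem2_sum {α : Type} (s : Finset α) (f : α → BC) :
    idem2 (∑ a ∈ s, f a) = ∑ a ∈ s, idem2 (f a) := by
  simp [idem2, Prod.fst_sum, Prod.snd_sum, Finset.mul_sum, ← Finset.sum_add_distrib]

lemma idem1_bcEntry {I J : Type} (A : BCMat I J) (j : I) (k : J) :
    idem1 (bcEntry A j k) = midem1 A j k := by
  simp [idem1, bcEntry, midem1, Matrix.sub_apply]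

lemma idem2_bcEntry {I J : Type} (A : BCMat I J) (j : I) (k : J) :
    idem2 (bcEntry A j k) = midem2 A j k := by
  simp [idem2, bcEntry, midem2, Matrix.add_apply]

lemma idem1_quadForm {I : Type} [Fintype I] (A : BCMat I I) (c : I → BC) :
    idem1 (quadForm A c)
      = star (fun j => idem1 (c j)) ⬝ᵥ (midem1 A) *ᵥ (fun j => idem1 (c j)) := by
  simp_rw [quadForm, idem1_sum, idem1_bcMul, idem1_bcStar, idem1_bcEntry]
  simp only [dotProduct, mulVec, Pi.star_apply, RCLike.star_def, Finset.mul_sum]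

lemma idem2_quadForm {I : Type} [Fintype I] (A : BCMat I I) (c : I → BC) :
    idem2 (quadForm A c)
      = star (fun j => idem2 (c j)) ⬝ᵥ (midem2 A) *ᵥ (fun j => idem2 (c j)) := by
  simp_rw [quadForm, idem2_sum, idem2_bcMul, idem2_bcStar, idem2_bcEntry]
  simp only [dotProduct, mulVec, Pi.star_apply, RCLike.star_def, Finset.mul_sum]

lemma midem1_bmul {I J K : Type} [Fintype J] (X : BCMat I J) (Y : BCMat J K) :
    midem1 (bmul X Y) = midem1 X * midem1 Y := by
  simp only [midem1, bmul, Matrix.sub_mul, Matrix.mul_sub, Matrix.smul_mul, Matrix.mul_smul,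
    smul_smul, Complex.I_mul_I, neg_one_smul, smul_add, smul_sub]
  abel

lemma midem2_bmul {I J K : Type} [Fintype J] (X : BCMat I J) (Y : BCMat J K) :
    midem2 (bmul X Y) = midem2 X * midem2 Y := by
  simp only [midem2, bmul, Matrix.add_mul, Matrix.mul_add, Matrix.smul_mul, Matrix.mul_smul,
    smul_smul, Complex.I_mul_I, neg_one_smul, smul_add, smul_sub]
  abel

lemma midem1_bcStarT {I J : Type} (B : BCMat I J) :
    midem1 (bcStarT B) = (midem1 B)ᴴ := by
  simp only [midem1, bcStarT, Matrix.conjTranspose_sub, Matrix.conjTranspose_smul,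
    RCLike.star_def, Complex.conj_I, neg_smul, sub_neg_eq_add, smul_neg, neg_neg]

lemma midem2_bcStarT {I J : Type} (B : BCMat I J) :
    midem2 (bcStarT B) = (midem2 B)ᴴ := by
  simp only [midem2, bcStarT, Matrix.conjTranspose_add, Matrix.conjTranspose_smul,
    RCLike.star_def, Complex.conj_I, neg_smul, smul_neg, neg_neg]

lemma bcmat_ext {I J : Type} {X Y : BCMat I J}
    (h1 : midem1 X = midem1 Y) (h2 : midem2 X = midem2 Y) : X = Y := by
  have e1 : ∀ i j, X.1 i j - Complex.I * X.2 i j = Y.1 i j - Complex.I * Y.2 i j := fun i j => by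
    simpa [midem1, Matrix.sub_apply] using congrFun (congrFun h1 i) j
  have e2 : ∀ i j, X.1 i j + Complex.I * X.2 i j = Y.1 i j + Complex.I * Y.2 i j := fun i j => by
    simpa [midem2, Matrix.add_apply] using congrFun (congrFun h2 i) j
  refine Prod.ext ?_ ?_
  · ext i j
    linear_combination (e1 i j + e2 i j) / 2
  · ext i j
    linear_combination (Complex.I / 2) * (e1 i j - e2 i j)
      + (X.2 i j - Y.2 i j) * Complex.I_sq

lemma hermitian_of_im_form {I : Type} [Fintype I] [DecidableEq I] (M : Matrix I I ℂ)
    (h : ∀ x : I → ℂ, (star x ⬝ᵥ M *ᵥ x).im = 0) : M.IsHermitian := by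
  have hd : ∀ j, (M j j).im = 0 := by
    intro j
    have := h (Pi.single j 1)
    simpa [← Pi.single_star, single_dotProduct] using this
  have key : ∀ (j k : I) (a b : ℂ),
      star (Pi.single j a + Pi.single k b) ⬝ᵥ M *ᵥ (Pi.single j a + Pi.single k b)
        = (starRingEnd ℂ) a * (M j j * a) + (starRingEnd ℂ) a * (M j k * b)
          + (starRingEnd ℂ) b * (M k j * a) + (starRingEnd ℂ) b * (M k k * b) := by
    intro j k a b
    simp only [star_add, ← Pi.single_star, Matrix.mulVec_add, dotProduct_add,
      add_dotProduct, Matrix.mulVec_single, single_dotProduct, Pi.add_apply,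
      RCLike.star_def, Pi.smul_apply, op_smul_eq_mul, Matrix.col_apply]
    ring
  ext j k
  by_cases hjk : j = k
  · subst hjk
    simp only [Matrix.conjTranspose_apply, RCLike.star_def]
    exact Complex.conj_eq_iff_im.2 (hd j)
  · have h1 := h (Pi.single j 1 + Pi.single k 1)
    have h2 := h (Pi.single j 1 + Pi.single k Complex.I)
    rw [key] at h1 h2
    simp only [_root_.map_one, one_mul, mul_one, Complex.conj_I] at h1 h2
    have hj := hd j; have hk := hd k
    simp only [Matrix.conjTranspose_apply, RCLike.star_def]
    apply Complex.ext <;>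
      simp only [Complex.conj_re, Complex.conj_im, Complex.add_im, Complex.add_re,
        Complex.mul_im, Complex.mul_re, Complex.I_re, Complex.I_im, Complex.neg_re,
        Complex.neg_im] at h1 h2 ⊢ <;> linarith [h1, h2, hj, hk]

lemma posSemidef_of_form {I : Type} [Fintype I] [DecidableEq I] (M : Matrix I I ℂ)
    (h : ∀ x : I → ℂ, (star x ⬝ᵥ M *ᵥ x).im = 0 ∧ 0 ≤ (star x ⬝ᵥ M *ᵥ x).re) :
    M.PosSemidef := by
  refine Matrix.PosSemidef.of_dotProduct_mulVec_nonneg (hermitian_of_im_form M (fun x => (h x).1)) fun x => ?_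
  rw [Complex.le_def]
  simpa using ⟨(h x).2, ((h x).1).symm⟩

end AuxLemmas

noncomputable section

/-- `A` is hyperbolic positive iff `A = (B*)ᵗ · B` for some
bicomplex matrix `B ∈ 𝔹ℂ^{m×n}`. -/
theorem hypPos_iff_starT_mul {n : ℕ} (A : BCMat (Fin n) (Fin n)) :
    HypPos A ↔ ∃ (m : ℕ) (B : BCMat (Fin m) (Fin n)), A = bmul (bcStarT B) B := by
  constructor
  · intro h
    have hpos1 : (midem1 A).PosSemidef := by
      refine posSemidef_of_form _ fun u => ?_
      set c : Fin n → BC := fun j => (u j / 2, Complex.I * u j / 2) with hc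
      have hu : (fun j => idem1 (c j)) = u := by
        funext j
        simp only [hc, idem1]
        linear_combination (-(u j) / 2) * Complex.I_sq
      have hq := h c
      obtain ⟨h1, h2, _, _⟩ := hq
      rw [idem1_quadForm, hu] at h1 h2
      exact ⟨h1, h2⟩
    have hpos2 : (midem2 A).PosSemidef := by
      refine posSemidef_of_form _ fun u => ?_
      set c : Fin n → BC := fun j => (u j / 2, -(Complex.I * u j) / 2) with hc
      have hu : (fun j => idem2 (c j)) = u := by
        funext j
        simp only [hc, idem2]
        linear_combination (-(u j) / 2) * Complex.I_sq
      have hq := h c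
      obtain ⟨_, _, h3, h4⟩ := hq
      rw [idem2_quadForm, hu] at h3 h4
      exact ⟨h3, h4⟩
    obtain ⟨C1, hC1⟩ : ∃ C : Matrix (Fin n) (Fin n) ℂ, midem1 A = Cᴴ * C := by
      open MatrixOrder in
      obtain ⟨X, hX, -, hXe⟩ := CFC.exists_sqrt_of_isSelfAdjoint_of_quasispectrumRestricts
        hpos1.isHermitian (QuasispectrumRestricts.nnreal_of_nonneg hpos1.nonneg)
      exact ⟨X, by rw [← hXe]; nth_rewrite 1 [← hX.star_eq]; rfl⟩
    obtain ⟨C2, hC2⟩ : ∃ C : Matrix (Fin n) (Fin n) ℂ, midem2 A = Cᴴ * C := by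
      open MatrixOrder in
      obtain ⟨X, hX, -, hXe⟩ := CFC.exists_sqrt_of_isSelfAdjoint_of_quasispectrumRestricts
        hpos2.isHermitian (QuasispectrumRestricts.nnreal_of_nonneg hpos2.nonneg)
      exact ⟨X, by rw [← hXe]; nth_rewrite 1 [← hX.star_eq]; rfl⟩
    refine ⟨n, (((1:ℂ)/2) • (C1 + C2), (Complex.I/2) • (C1 - C2)), ?_⟩
    set B : BCMat (Fin n) (Fin n) := (((1:ℂ)/2) • (C1 + C2), (Complex.I/2) • (C1 - C2)) with hB
    have hm1 : midem1 B = C1 := by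
      ext i j
      simp only [hB, midem1, Matrix.sub_apply, Matrix.smul_apply, Matrix.add_apply,
        smul_eq_mul]
      linear_combination (-(C1 i j - C2 i j) / 2) * Complex.I_sq
    have hm2 : midem2 B = C2 := by
      ext i j
      simp only [hB, midem2, Matrix.add_apply, Matrix.smul_apply, Matrix.sub_apply,
        smul_eq_mul]
      linear_combination ((C1 i j - C2 i j) / 2) * Complex.I_sq
    refine bcmat_ext ?_ ?_
    · rw [midem1_bmul, midem1_bcStarT, hm1, hC1]
    · rw [midem2_bmul, midem2_bcStarT, hm2, hC2]
  · rintro ⟨m, B, rfl⟩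
    intro c
    have hp1 := (Matrix.posSemidef_conjTranspose_mul_self (midem1 B)).dotProduct_mulVec_nonneg
      (fun j => idem1 (c j))
    have hp2 := (Matrix.posSemidef_conjTranspose_mul_self (midem2 B)).dotProduct_mulVec_nonneg
      (fun j => idem2 (c j))
    rw [Complex.le_def] at hp1 hp2
    simp only [Complex.zero_re, Complex.zero_im] at hp1 hp2
    have e1 : idem1 (quadForm (bmul (bcStarT B) B) c)
        = star (fun j => idem1 (c j)) ⬝ᵥ ((midem1 B)ᴴ * midem1 B) *ᵥ (fun j => idem1 (c j)) := by
      rw [idem1_quadForm, midem1_bmul, midem1_bcStarT]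
    have e2 : idem2 (quadForm (bmul (bcStarT B) B) c)
        = star (fun j => idem2 (c j)) ⬝ᵥ ((midem2 B)ᴴ * midem2 B) *ᵥ (fun j => idem2 (c j)) := by
      rw [idem2_quadForm, midem2_bmul, midem2_bcStarT]
    exact ⟨by rw [e1]; exact hp1.2.symm, by rw [e1]; exact hp1.1,
      by rw [e2]; exact hp2.2.symm, by rw [e2]; exact hp2.1⟩

end
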